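/- For every real β ≥ 1 and all x with 0 < x < π, ((π² − x²)/(π² + x²))^β ≤ sin(x)/x. -/

import Mathlib

open Real

private lemma zs_case1_poly (π' u : ℝ) (hu0 : 0 < u) (hus : u ≤ π'^2/4)
    (hA1 : (9.8696 : ℝ) < π'^2) (hA2 : π'^2 < 9.86961) :
    0 ≤ (2 - π'^2/6) - u*(1/6 - π'^2/120) + u^2*(1/120 - π'^2/5040) - u^3/5040 := by
  have hs : 0 ≤ π'^2/4 - u := by linarith
  nlinarith [sq_nonneg (π'^2/4 - u), mul_nonneg (mul_nonneg hs hs) hs, hs, hu0.le, mul_nonneg hs hu0.le]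

set_option maxHeartbeats 1000000 in
private lemma zs_case2_poly (B y : ℝ) (hy0 : 0 < y) (hy : y < B/2)
    (hB1 : (3.141592 : ℝ) < B) (hB2 : B < 3.141593) :
    0 ≤ B - (B^2/3)*y + (B/3)*y^2 + (B^2/60 - 1/6)*y^3 - (B/60)*y^4
      + (1/120 - B^2/2520)*y^5 + (B/2520)*y^6 - y^7/5040 := by
  have hB2sq : B^2 < 9.86961 := by nlinarith
  have hB1sq : (9.8696 : ℝ) < B^2 := by nlinarith
  have hyu : y ≤ 1.5708 := by nlinarith
  have h2 : y^2 ≤ 2.4675 := by nlinarith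
  have hy3 : y^3 ≤ 1.5708 * y^2 := by nlinarith [sq_nonneg y]
  have hy4 : y^4 ≤ 2.4675 * y^2 := by nlinarith [sq_nonneg y, sq_nonneg (y^2)]
  have hy5 : 0 ≤ (1/120 - B^2/2520) * y^5 := by
    apply mul_nonneg (by nlinarith) (by positivity)
  have hy6 : 0 ≤ (B/2520) * y^6 := by positivity
  have h4 : y^4 ≤ 6.0886 := by nlinarith [sq_nonneg y]
  have h5 : y^5 ≤ 9.565 := by nlinarith [pow_nonneg hy0.le 4]
  have hy7 : y^7 ≤ 9.565 * y^2 := by nlinarith [mul_le_mul_of_nonneg_right h5 (sq_nonneg y)]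
  have hq : 0 ≤ 3.141592 - 3.28987*y + 0.9126*y^2 := by
    nlinarith [sq_nonneg (y - 1.8025)]
  have p1 : 0 ≤ (9.86961 - B^2) * y := mul_nonneg (by linarith) hy0.le
  have p2 : 0 ≤ (B - 3.141592) * y^2 := mul_nonneg (by linarith) (sq_nonneg y)
  have p3 : 0 ≤ (B^2 - 9.8696) * y^3 := mul_nonneg (by linarith) (pow_nonneg hy0.le 3)
  have p4 : 0 ≤ (3.141593 - B) * y^4 := mul_nonneg (by linarith) (pow_nonneg hy0.le 4)
  linarith [p1, p2, p3, p4, hy3, hy4, hy5, hy6, hy7, hq, hB1, sq_nonneg y, hy0.le]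

private lemma zs_deriv_nonneg_aux (f f' : ℝ → ℝ) (hder : ∀ x, HasDerivAt f (f' x) x)
    (h0 : f 0 = 0) (hpos : ∀ x, 0 ≤ x → 0 ≤ f' x) : ∀ x, 0 ≤ x → 0 ≤ f x := by
  intro x hx
  have hm : MonotoneOn f (Set.Ici 0) := by
    apply monotoneOn_of_deriv_nonneg (convex_Ici 0)
    · exact fun y _ => ((hder y).differentiableAt).continuousAt.continuousWithinAt
    · intro y hy
      exact (hder y).differentiableAt.differentiableWithinAt
    · intro y hy
      rw [interior_Ici] at hy
      rw [(hder y).deriv]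
      exact hpos y hy.le
  calc (0:ℝ) = f 0 := h0.symm
    _ ≤ f x := hm Set.self_mem_Ici hx hx

private lemma zs_sin_ge_deg3 : ∀ x : ℝ, 0 ≤ x → 0 ≤ Real.sin x - (x - x^3/6) := by
  apply zs_deriv_nonneg_aux _ (fun x => Real.cos x - (1 - x^2/2))
  · intro x
    have h2 : HasDerivAt (fun x : ℝ => x - x^3/6) (1 - x^2/2) x := by
      have h := (hasDerivAt_id x).sub ((hasDerivAt_pow 3 x).div_const 6)
      refine h.congr_deriv ?_
      push_cast; ring
    exact (Real.hasDerivAt_sin x).sub h2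
  · norm_num
  · intro x _
    have := Real.one_sub_sq_div_two_le_cos (x := x)
    linarith

private lemma zs_cos_le_deg4 : ∀ x : ℝ, 0 ≤ x → 0 ≤ (1 - x^2/2 + x^4/24) - Real.cos x := by
  apply zs_deriv_nonneg_aux _ (fun x => Real.sin x - (x - x^3/6))
  · intro x
    have h2 : HasDerivAt (fun x : ℝ => 1 - x^2/2 + x^4/24) (-(x - x^3/6) + 0) x := by
      have h := (((hasDerivAt_const x (1:ℝ)).sub ((hasDerivAt_pow 2 x).div_const 2)).add
        ((hasDerivAt_pow 4 x).div_const 24))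
      refine h.congr_deriv ?_
      push_cast; ring
    have := h2.sub (Real.hasDerivAt_cos x)
    refine this.congr_deriv ?_; ring
  · norm_num
  · exact zs_sin_ge_deg3

private lemma zs_sin_le_deg5 : ∀ x : ℝ, 0 ≤ x → 0 ≤ (x - x^3/6 + x^5/120) - Real.sin x := by
  apply zs_deriv_nonneg_aux _ (fun x => (1 - x^2/2 + x^4/24) - Real.cos x)
  · intro x
    have h2 : HasDerivAt (fun x : ℝ => x - x^3/6 + x^5/120) (1 - x^2/2 + x^4/24) x := by
      have h := (((hasDerivAt_id x).sub ((hasDerivAt_pow 3 x).div_const 6)).add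
        ((hasDerivAt_pow 5 x).div_const 120))
      refine h.congr_deriv ?_
      push_cast; ring
    exact h2.sub (Real.hasDerivAt_sin x)
  · norm_num
  · exact zs_cos_le_deg4

private lemma zs_cos_ge_deg6 : ∀ x : ℝ, 0 ≤ x → 0 ≤ Real.cos x - (1 - x^2/2 + x^4/24 - x^6/720) := by
  apply zs_deriv_nonneg_aux _ (fun x => (x - x^3/6 + x^5/120) - Real.sin x)
  · intro x
    have h2 : HasDerivAt (fun x : ℝ => 1 - x^2/2 + x^4/24 - x^6/720)
        (-(x - x^3/6 + x^5/120)) x := by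
      have h := ((((hasDerivAt_const x (1:ℝ)).sub ((hasDerivAt_pow 2 x).div_const 2)).add
        ((hasDerivAt_pow 4 x).div_const 24)).sub ((hasDerivAt_pow 6 x).div_const 720))
      refine h.congr_deriv ?_
      push_cast; ring
    have := (Real.hasDerivAt_cos x).sub h2
    refine this.congr_deriv ?_; ring
  · norm_num
  · exact zs_sin_le_deg5

private lemma zs_sin_ge_deg7 : ∀ x : ℝ, 0 ≤ x → 0 ≤ Real.sin x - (x - x^3/6 + x^5/120 - x^7/5040) := by
  apply zs_deriv_nonneg_aux _ (fun x => Real.cos x - (1 - x^2/2 + x^4/24 - x^6/720))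
  · intro x
    have h2 : HasDerivAt (fun x : ℝ => x - x^3/6 + x^5/120 - x^7/5040)
        (1 - x^2/2 + x^4/24 - x^6/720) x := by
      have h := ((((hasDerivAt_id x).sub ((hasDerivAt_pow 3 x).div_const 6)).add
        ((hasDerivAt_pow 5 x).div_const 120)).sub ((hasDerivAt_pow 7 x).div_const 5040))
      refine h.congr_deriv ?_
      push_cast; ring
    exact (Real.hasDerivAt_sin x).sub h2
  · norm_num
  · exact zs_cos_ge_deg6

private lemma zs_redheffer (x : ℝ) (hx : 0 < x) (hxpi : x < π) :
    (π ^ 2 - x ^ 2) / (π ^ 2 + x ^ 2) ≤ Real.sin x / x := by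
  have hπ1 : (3.141592 : ℝ) < π := by
    have := Real.pi_gt_d6; linarith
  have hπ2 : π < 3.141593 := by
    have := Real.pi_lt_d6; linarith
  have hA1 : (9.8696 : ℝ) < π^2 := by nlinarith
  have hA2 : π^2 < 9.86961 := by nlinarith
  rw [div_le_div_iff₀ (by positivity) hx]
  rcases le_or_gt x (π/2) with hc | hc
  · have h7 := zs_sin_ge_deg7 x hx.le
    have hus : x^2 ≤ π^2/4 := by nlinarith
    have hG := zs_case1_poly π (x^2) (by positivity) hus hA1 hA2
    have key : (π^2 - x^2) * x ≤ (x - x^3/6 + x^5/120 - x^7/5040) * (π^2 + x^2) := by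
      nlinarith [mul_nonneg (pow_nonneg hx.le 3) hG]
    have hmul : (x - x^3/6 + x^5/120 - x^7/5040) * (π^2 + x^2) ≤ Real.sin x * (π^2 + x^2) := by
      apply mul_le_mul_of_nonneg_right (by linarith) (by positivity)
    linarith
  · set y := π - x with hy
    clear_value y
    have hy0 : 0 < y := by rw [hy]; linarith
    have hy2 : y < π/2 := by rw [hy]; linarith
    have h7 := zs_sin_ge_deg7 y hy0.le
    have hE := zs_case2_poly π y hy0 hy2 hπ1 hπ2
    have hs : Real.sin x = Real.sin y := by
      rw [hy, Real.sin_pi_sub]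
    rw [hs, show x = π - y from by rw [hy]; ring]
    have key : (π^2 - (π - y)^2) * (π - y)
        ≤ (y - y^3/6 + y^5/120 - y^7/5040) * (π^2 + (π - y)^2) := by
      nlinarith [mul_nonneg (sq_nonneg y) hE]
    have hmul : (y - y^3/6 + y^5/120 - y^7/5040) * (π^2 + (π - y)^2)
        ≤ Real.sin y * (π^2 + (π - y)^2) := by
      apply mul_le_mul_of_nonneg_right (by linarith) (by positivity)
    linarith

theorem zhu_sun_lower (β : ℝ) (hβ : 1 ≤ β) (x : ℝ) (hx : 0 < x) (hxpi : x < π) :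
    ((π ^ 2 - x ^ 2) / (π ^ 2 + x ^ 2)) ^ β ≤ Real.sin x / x := by
  have hbase0 : 0 ≤ (π ^ 2 - x ^ 2) / (π ^ 2 + x ^ 2) := by
    apply div_nonneg _ (by positivity)
    nlinarith [Real.pi_pos]
  have hbase1 : (π ^ 2 - x ^ 2) / (π ^ 2 + x ^ 2) ≤ 1 := by
    rw [div_le_one (by positivity)]
    nlinarith
  calc ((π ^ 2 - x ^ 2) / (π ^ 2 + x ^ 2)) ^ β
      ≤ ((π ^ 2 - x ^ 2) / (π ^ 2 + x ^ 2)) ^ (1:ℝ) :=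
        Real.rpow_le_rpow_of_exponent_ge' hbase0 hbase1 (by norm_num) hβ
    _ = (π ^ 2 - x ^ 2) / (π ^ 2 + x ^ 2) := Real.rpow_one _
    _ ≤ Real.sin x / x := zs_redheffer x hx hxpi
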